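/- The number of spanning trees T of the acyclic tournament graph G_d satisfying (a) there are no i < j < k such that both (i,j) and (j,k) are arcs of T, and (b) there are no i < j < k < l such that both (i,k) and (j,l) are arcs of T, equals the (d-1)-st Catalan number C_{d-1} = (1/d) binom(2(d-1), d-1). -/

import Mathlib

/-- Arcs of the acyclic tournament graph `G_d`: pairs `(i,j)` with `i < j`. -/
abbrev Arc (d : ℕ) := {p : Fin d × Fin d // p.1 < p.2}

/-- The undirected simple graph on `{1,...,d}` underlying a set `T` of arcs of `G_d`. -/
def treeGraph (d : ℕ) (T : Finset (Arc d)) : SimpleGraph (Fin d) :=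
  SimpleGraph.fromEdgeSet {s | ∃ e ∈ T, s = s(e.1.1, e.1.2)}
open SimpleGraph
namespace NCT
variable {V : Type*} [LinearOrder V] {G : SimpleGraph V}
def AltP (G : SimpleGraph V) : Prop :=
  ∀ a b c : V, a < b → b < c → G.Adj a b → G.Adj b c → False
def NcrP (G : SimpleGraph V) : Prop :=
  ∀ a b c d : V, a < b → b < c → c < d → G.Adj a c → G.Adj b d → False
lemma cover {a b c : V} (w : G.Walk a b) (hc : c ∉ w.support) (h1 : a < c) (h2 : c < b) :
    ∃ x y, G.Adj x y ∧ s(x, y) ∈ w.edges ∧ x < c ∧ c < y := by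
  induction w with
  | nil => exact absurd (h1.trans h2) (lt_irrefl _)
  | @cons u v w h p ih =>
    rw [Walk.support_cons, List.mem_cons] at hc
    push_neg at hc
    rcases lt_trichotomy v c with hvc | rfl | hcv
    · obtain ⟨x, y, hxy, he, hx, hy⟩ := ih hc.2 hvc h2
      exact ⟨x, y, hxy, by simp [he], hx, hy⟩
    · exact absurd (Walk.start_mem_support p) hc.2
    · exact ⟨u, v, h, by simp, h1, hcv⟩
lemma inside (hncr : NcrP G) {α β x b : V} (hadj : G.Adj α β) (hαβ : α < β)
    (w : G.Walk x b) (hα : α ∉ w.support) (hβ : β ∉ w.support)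
    (h1 : α < x) (h2 : x < β) : ∀ v ∈ w.support, α < v ∧ v < β := by
  induction w with
  | nil => intro v hv; rw [Walk.support_nil, List.mem_singleton] at hv; exact hv ▸ ⟨h1, h2⟩
  | @cons u v w h p ih =>
    rw [Walk.support_cons, List.mem_cons] at hα hβ
    push_neg at hα hβ
    have hv : α < v ∧ v < β := by
      rcases h.ne.lt_or_gt with huv | hvu
      · refine ⟨h1.trans huv, ?_⟩
        by_contra hy
        have hvβ : v ≠ β := fun hh => hβ.2 (hh ▸ Walk.start_mem_support p)
        have hβv : β < v := lt_of_le_of_ne (not_lt.1 hy) hvβ.symm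
        exact hncr α u β v h1 h2 hβv hadj h
      · refine ⟨?_, hvu.trans h2⟩
        by_contra hy
        have hvα : v ≠ α := fun hh => hα.2 (hh ▸ Walk.start_mem_support p)
        have hvα' : v < α := lt_of_le_of_ne (not_lt.1 hy) hvα
        exact hncr v α u β hvα' h1 h2 h.symm hadj
    intro z hz
    rw [Walk.support_cons, List.mem_cons] at hz
    rcases hz with rfl | hz
    · exact ⟨h1, h2⟩
    · exact ih hα.2 hβ.2 hv.1 hv.2 z hz
lemma walk_cases {x z : V} (p : G.Walk x z) (hne : x ≠ z) :
    ∃ b, ∃ h : G.Adj x b, ∃ q : G.Walk b z, p = SimpleGraph.Walk.cons h q := by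
  cases p with
  | nil => exact absurd rfl hne
  | cons h q => exact ⟨_, h, q, rfl⟩
lemma key3 (halt : AltP G) (hncr : NcrP G) {y u w : V}
    (hyu : G.Adj u y) (hyw : G.Adj w y) (r : G.Walk u w) (huw : u < w)
    (hmaxr : ∀ z ∈ r.support, z < y) (hnd : r.support.Nodup) : False := by
  cases r with
  | nil => exact absurd huw (lt_irrefl _)
  | @cons _ a _ hua r₁ =>
    have hmem : ∀ z ∈ r₁.support, z < y := fun z hz => hmaxr z (by simp [hz])
    have huy : u < y := hmaxr u (by simp)
    have hwy : w < y := hmem w (Walk.end_mem_support r₁)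
    have hau : u < a := by
      rcases hua.ne.lt_or_gt with h' | h'
      · exact h'
      · exact (halt a u y h' huy hua.symm hyu).elim
    rcases lt_trichotomy a w with haw | rfl | hwa
    · -- main case
      obtain ⟨b, hwb, r₂, hr⟩ := walk_cases r₁.reverse haw.ne'
      have hnd₁ : r₁.support.Nodup := (List.nodup_cons.1 (by simpa using hnd)).2
      have hbr₁ : ∀ z ∈ r₂.support, z ∈ r₁.support := by
        intro z hz
        have : z ∈ r₁.reverse.support := by rw [hr]; simp [hz]
        simpa using this
      have hwb' : w < b := by
        rcases hwb.ne.lt_or_gt with h' | h'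
        · exact h'
        · exact (halt b w y h' hwy hwb.symm hyw).elim
      have hwr₂ : w ∉ r₂.support := by
        have : (w :: r₂.support).Nodup := by
          have h3 : r₁.reverse.support.Nodup := by
            rw [Walk.support_reverse, List.nodup_reverse]; exact hnd₁
          rw [hr, Walk.support_cons] at h3
          exact h3
        exact (List.nodup_cons.1 this).1
      obtain ⟨x, z, hxz, hemem, hxw, hwz⟩ :=
        cover (r₂.reverse) (by simpa using hwr₂) haw hwb'
      have hzy : z < y := by
        have hz : z ∈ r₂.reverse.support := Walk.snd_mem_support_of_mem_edges _ hemem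
        exact hmem z (hbr₁ z (by simpa using hz))
      exact hncr x w z y hxw hwz hzy hxz hyw
    · exact halt u a y huw hwy hua hyw
    · have hay : a < y := hmem a (Walk.start_mem_support r₁)
      exact hncr u w a y huw hwa hay hua hyw

theorem acyclic (halt : AltP G) (hncr : NcrP G) : G.IsAcyclic := by
  intro v c hc
  classical
  have hne : c.support.toFinset.Nonempty := ⟨v, by simp⟩
  set y := c.support.toFinset.max' hne with hy
  have hymem : y ∈ c.support := by
    have := c.support.toFinset.max'_mem hne; simpa using this
  have hmax : ∀ z ∈ c.support, z ≤ y := fun z hz =>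
    c.support.toFinset.le_max' z (by simpa using hz)
  have hc' := hc.rotate hymem
  set c' := c.rotate y hymem with hcdef
  have hmax' : ∀ z ∈ c'.support, z ≤ y := by
    intro z hz
    rw [Walk.support_eq_cons] at hz
    rcases List.mem_cons.1 hz with rfl | hz
    · exact le_refl _
    · exact hmax z (List.mem_of_mem_tail ((Walk.support_rotate c y hymem).mem_iff.1 hz))
  clear_value c'
  clear hcdef hc hymem
  cases c' with
  | nil => exact hc'.ne_nil rfl
  | @cons _ u _ hyu q =>
    have hqmax : ∀ z ∈ q.support, z ≤ y := fun z hz => hmax' z (by simp [hz])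
    have hqnd : q.support.Nodup := by
      have := hc'.support_nodup
      simpa using this
    have huy : u < y := lt_of_le_of_ne (hqmax u q.start_mem_support) hyu.ne'
    obtain ⟨w, hyw, r, hr⟩ := walk_cases q.reverse huy.ne'
    have hrq : ∀ z ∈ r.support, z ∈ q.support := by
      intro z hz
      have : z ∈ q.reverse.support := by rw [hr]; simp [hz]
      simpa using this
    have hynr : y ∉ r.support := by
      have : (y :: r.support).Nodup := by
        have := hqnd
        rw [← List.nodup_reverse, ← Walk.support_reverse, hr, Walk.support_cons] at this
        exact this
      exact (List.nodup_cons.1 this).1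
    have hrmax : ∀ z ∈ r.support, z < y := fun z hz =>
      lt_of_le_of_ne (hqmax z (hrq z hz)) (fun h => hynr (h ▸ hz))
    have hrnd : r.support.Nodup := by
      have : (y :: r.support).Nodup := by
        have := hqnd
        rw [← List.nodup_reverse, ← Walk.support_reverse, hr, Walk.support_cons] at this
        exact this
      exact (List.nodup_cons.1 this).2
    have hwy : w < y := hrmax w r.start_mem_support
    have huw : u ≠ w := by
      intro h
      subst h
      have h1 : s(y, u) ∈ q.edges := by
        have : s(y, u) ∈ q.reverse.edges := by rw [hr]; simp
        simpa using this
      have h2 := hc'.isTrail.edges_nodup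
      rw [Walk.edges_cons] at h2
      exact (List.nodup_cons.1 h2).1 h1
    rcases huw.lt_or_gt with h' | h'
    · exact key3 halt hncr hyu.symm hyw.symm r.reverse h'
        (fun z hz => hrmax z (by simpa using hz)) (by simpa using hrnd)
    · exact key3 halt hncr hyw.symm hyu.symm r h' hrmax hrnd

lemma reach_of_mem_support {W : Type*} [DecidableEq W] {H : SimpleGraph W} {x y : W}
    (w : H.Walk x y) {z : W} (hz : z ∈ w.support) : H.Reachable x z :=
  ⟨w.takeUntil z hz⟩

/-! ## ℕ-level -/

def arcGraph (T : Finset (ℕ × ℕ)) : SimpleGraph ℕ :=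
  SimpleGraph.fromEdgeSet {s | ∃ p ∈ T, s = s(p.1, p.2)}

def Ok (n : ℕ) (T : Finset (ℕ × ℕ)) : Prop :=
  (∀ p ∈ T, p.1 < p.2 ∧ p.2 < n) ∧
  (∀ p ∈ T, ∀ q ∈ T, p.2 ≠ q.1) ∧
  (∀ p ∈ T, ∀ q ∈ T, ¬(p.1 < q.1 ∧ q.1 < p.2 ∧ p.2 < q.2)) ∧
  (∀ v < n, (arcGraph T).Reachable 0 v)

lemma arcGraph_adj {T : Finset (ℕ × ℕ)} {x y : ℕ} :
    (arcGraph T).Adj x y ↔ ((x, y) ∈ T ∨ (y, x) ∈ T) ∧ x ≠ y := by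
  constructor
  · intro h
    rw [arcGraph, fromEdgeSet_adj] at h
    obtain ⟨⟨p, hp, hs⟩, hne⟩ := h
    rw [Sym2.eq_iff] at hs
    rcases hs with ⟨h1, h2⟩ | ⟨h1, h2⟩
    · exact ⟨Or.inl (by rw [h1, h2]; exact hp), hne⟩
    · exact ⟨Or.inr (by rw [h1, h2]; exact hp), hne⟩
  · rintro ⟨h | h, hne⟩ <;> rw [arcGraph, fromEdgeSet_adj]
    · exact ⟨⟨(x, y), h, rfl⟩, hne⟩
    · exact ⟨⟨(y, x), h, Sym2.eq_swap⟩, hne⟩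

lemma adj_of_mem {T : Finset (ℕ × ℕ)} {x y : ℕ} (h : (x, y) ∈ T) (hxy : x < y) :
    (arcGraph T).Adj x y := arcGraph_adj.2 ⟨Or.inl h, hxy.ne⟩

lemma adj_elim {T : Finset (ℕ × ℕ)} (harcs : ∀ p ∈ T, p.1 < p.2) {x y : ℕ}
    (h : (arcGraph T).Adj x y) (hxy : x < y) : (x, y) ∈ T := by
  rcases (arcGraph_adj.1 h).1 with h' | h'
  · exact h'
  · exact absurd (harcs _ h') (by simp; omega)

lemma altP_of {T : Finset (ℕ × ℕ)} (harcs : ∀ p ∈ T, p.1 < p.2)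
    (halt : ∀ p ∈ T, ∀ q ∈ T, p.2 ≠ q.1) : AltP (arcGraph T) := by
  intro a b c hab hbc h1 h2
  exact halt _ (adj_elim harcs h1 hab) _ (adj_elim harcs h2 hbc) rfl

lemma ncrP_of {T : Finset (ℕ × ℕ)} (harcs : ∀ p ∈ T, p.1 < p.2)
    (hncr : ∀ p ∈ T, ∀ q ∈ T, ¬(p.1 < q.1 ∧ q.1 < p.2 ∧ p.2 < q.2)) :
    NcrP (arcGraph T) := by
  intro a b c d hab hbc hcd h1 h2
  exact hncr _ (adj_elim harcs h1 (hab.trans hbc)) _ (adj_elim harcs h2 (hbc.trans hcd))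
    ⟨hab, hbc, hcd⟩

lemma arcGraph_mono {T S : Finset (ℕ × ℕ)} (h : T ⊆ S) : arcGraph T ≤ arcGraph S := by
  apply SimpleGraph.fromEdgeSet_mono
  rintro e ⟨p, hp, rfl⟩
  exact ⟨p, h hp, rfl⟩

lemma reach_mono {T S : Finset (ℕ × ℕ)} (h : T ⊆ S) {x y : ℕ}
    (hr : (arcGraph T).Reachable x y) : (arcGraph S).Reachable x y :=
  hr.mono (arcGraph_mono h)

def shiftArc (s : ℕ) (p : ℕ × ℕ) : ℕ × ℕ := (p.1 + s, p.2 + s)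
def unshiftArc (s : ℕ) (p : ℕ × ℕ) : ℕ × ℕ := (p.1 - s, p.2 - s)

lemma reach_shift {T : Finset (ℕ × ℕ)} (s : ℕ) {x y : ℕ}
    (h : (arcGraph T).Reachable x y) :
    (arcGraph (T.image (shiftArc s))).Reachable (x + s) (y + s) := by
  refine Reachable.map ⟨fun v => v + s, ?_⟩ h
  intro a b hab
  obtain ⟨h', hne⟩ := arcGraph_adj.1 hab
  show (arcGraph _).Adj (a + s) (b + s)
  refine arcGraph_adj.2 ⟨?_, by omega⟩
  rcases h' with h' | h'
  · exact Or.inl (Finset.mem_image.2 ⟨_, h', rfl⟩)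
  · exact Or.inr (Finset.mem_image.2 ⟨_, h', rfl⟩)

lemma reach_unshift {T : Finset (ℕ × ℕ)} {s : ℕ} (harcs : ∀ p ∈ T, p.1 < p.2)
    (hge : ∀ p ∈ T, s ≤ p.1) {x y : ℕ} (h : (arcGraph T).Reachable x y) :
    (arcGraph (T.image (unshiftArc s))).Reachable (x - s) (y - s) := by
  obtain ⟨w⟩ := h
  induction w with
  | nil => exact Reachable.refl _
  | @cons a b c hab p ih =>
    refine Reachable.trans ?_ ih
    obtain ⟨h', hne⟩ := arcGraph_adj.1 hab
    have key : ∀ u v : ℕ, (u, v) ∈ T → (arcGraph (T.image (unshiftArc s))).Reachable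
        (u - s) (v - s) := by
      intro u v huv
      have h1 : u < v := harcs _ huv
      have h2 : s ≤ u := hge _ huv
      exact (adj_of_mem (Finset.mem_image.2 ⟨_, huv, rfl⟩)
        (show u - s < v - s by omega)).reachable
    rcases h' with h' | h'
    · exact key _ _ h'
    · exact (key _ _ h').symm

lemma reach_le {T : Finset (ℕ × ℕ)} {k : ℕ} (harcs : ∀ p ∈ T, p.1 < p.2)
    (hsplit : ∀ p ∈ T, p.2 ≤ k ∨ k < p.1) {x y : ℕ}
    (h : (arcGraph T).Reachable x y) (hx : x ≤ k) : y ≤ k := by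
  obtain ⟨w⟩ := h
  induction w with
  | nil => exact hx
  | @cons a b c hab p ih =>
    apply ih
    rcases (arcGraph_adj.1 hab).1 with h' | h'
    · have := harcs _ h'; rcases hsplit _ h' with h'' | h'' <;> simp at this h'' <;> omega
    · have := harcs _ h'; rcases hsplit _ h' with h'' | h'' <;> simp at this h'' <;> omega

lemma edge_arc {S : Finset (ℕ × ℕ)} (harcs : ∀ p ∈ S, p.1 < p.2) {x y : ℕ}
    {w : (arcGraph S).Walk x y} {e : Sym2 ℕ} (he : e ∈ w.edges) :
    ∃ a b, e = s(a, b) ∧ (a, b) ∈ S ∧ a < b ∧ a ∈ w.support ∧ b ∈ w.support := by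
  induction e using Sym2.ind with
  | _ u v =>
    have hadj := w.adj_of_mem_edges he
    rcases (arcGraph_adj.1 hadj).1 with h | h
    · exact ⟨u, v, rfl, h, harcs _ h, w.fst_mem_support_of_mem_edges he,
        w.snd_mem_support_of_mem_edges he⟩
    · exact ⟨v, u, Sym2.eq_swap, h, harcs _ h, w.snd_mem_support_of_mem_edges he,
        w.fst_mem_support_of_mem_edges he⟩

lemma top_mem {m : ℕ} {T : Finset (ℕ × ℕ)} (hok : Ok (m + 2) T) : (0, m + 1) ∈ T := by
  classical
  obtain ⟨harcs', halt, hncr, hconn⟩ := hok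
  have harcs : ∀ p ∈ T, p.1 < p.2 := fun p hp => (harcs' p hp).1
  obtain ⟨w⟩ := hconn (m + 1) (by omega)
  obtain ⟨v1, h01, q, hq⟩ :=
    walk_cases (w.toPath : (arcGraph T).Walk 0 (m + 1)) (by omega)
  have hp : (Walk.cons h01 q).IsPath := hq ▸ w.toPath.2
  have hv1 : 0 < v1 := Nat.pos_of_ne_zero h01.ne'
  have harc1 : (0, v1) ∈ T := adj_elim harcs h01 hv1
  by_cases hv1top : v1 = m + 1
  · rwa [hv1top] at harc1
  · exfalso
    have hv1lt : v1 < m + 1 := by have := (harcs' _ harc1).2; omega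
    obtain ⟨v2, h12, q2, hq2⟩ := walk_cases q hv1top
    rw [hq2] at hp
    have hv21 : v2 < v1 := by
      rcases h12.ne.lt_or_gt with h' | h'
      · exact ((halt _ harc1 _ (adj_elim harcs h12 h')) rfl).elim
      · exact h'
    have hnd := hp.support_nodup
    rw [Walk.support_cons, Walk.support_cons] at hnd
    have h0q2 : 0 ∉ q2.support := by
      intro h; exact (List.nodup_cons.1 hnd).1 (by simp [h])
    have hv1q2 : v1 ∉ q2.support :=
      (List.nodup_cons.1 (List.nodup_cons.1 hnd).2).1
    have hv2pos : 0 < v2 := by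
      rcases Nat.eq_zero_or_pos v2 with h | h
      · exact absurd (by subst h; simp [Walk.start_mem_support] : (0:ℕ) ∈ v1 :: q2.support)
          (List.nodup_cons.1 hnd).1
      · exact h
    have := inside (ncrP_of harcs hncr) h01 hv1 q2 h0q2 hv1q2 hv2pos hv21 (m + 1)
      q2.end_mem_support
    omega

def glue (m k : ℕ) (T₁ T₂ : Finset (ℕ × ℕ)) : Finset (ℕ × ℕ) :=
  insert (0, m + 1) (T₁ ∪ T₂.image (shiftArc (k + 1)))

lemma split {m : ℕ} {T : Finset (ℕ × ℕ)} (hok : Ok (m + 2) T) :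
    ∃ k, k ≤ m ∧ ∃ T₁ T₂, Ok (k + 1) T₁ ∧ Ok ((m - k) + 1) T₂ ∧ T = glue m k T₁ T₂ := by
  classical
  have harcs : ∀ p ∈ T, p.1 < p.2 := fun p hp => (hok.1 p hp).1
  have htop : (0, m + 1) ∈ T := top_mem hok
  set T' := T.erase (0, m + 1) with hT'def
  have hT'sub : T' ⊆ T := Finset.erase_subset _ _
  have harcsT' : ∀ p ∈ T', p.1 < p.2 := fun p hp => harcs p (hT'sub hp)
  have hbndT' : ∀ p ∈ T', p.1 < p.2 ∧ p.2 < m + 2 := fun p hp => hok.1 p (hT'sub hp)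
  have haltT' : ∀ p ∈ T', ∀ q ∈ T', p.2 ≠ q.1 :=
    fun p hp q hq => hok.2.1 p (hT'sub hp) q (hT'sub hq)
  have hncrT' : ∀ p ∈ T', ∀ q ∈ T', ¬(p.1 < q.1 ∧ q.1 < p.2 ∧ p.2 < q.2) :=
    fun p hp q hq => hok.2.2.1 p (hT'sub hp) q (hT'sub hq)
  have hacyc : (arcGraph T).IsAcyclic :=
    acyclic (altP_of harcs hok.2.1) (ncrP_of harcs hok.2.2.1)
  -- endpoints of arcs of T' are < m+2
  have hvbnd : ∀ {x y : ℕ}, (arcGraph T').Adj x y → y < m + 2 := by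
    intro x y h
    rcases (arcGraph_adj.1 h).1 with h' | h'
    · exact (hbndT' _ h').2
    · have := hbndT' _ h'; omega
  -- every vertex is in the component of 0 or of m+1 after deleting the top arc
  have hAB : ∀ v < m + 2, (arcGraph T').Reachable 0 v ∨ (arcGraph T').Reachable (m + 1) v := by
    intro v hv
    obtain ⟨w0⟩ := hok.2.2.2 v hv
    rcases eq_or_ne v 0 with rfl | hv0
    · exact Or.inl (Reachable.refl _)
    obtain ⟨c, h0c, q, hq⟩ := walk_cases (w0.toPath : (arcGraph T).Walk 0 v) (Ne.symm hv0)
    have hp : (Walk.cons h0c q).IsPath := hq ▸ w0.toPath.2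
    have h0q : 0 ∉ q.support := by
      have := hp.support_nodup
      rw [Walk.support_cons] at this
      exact (List.nodup_cons.1 this).1
    by_cases hc : c = m + 1
    · subst hc
      refine Or.inr ⟨q.transfer (arcGraph T') ?_⟩
      intro e he
      obtain ⟨a, b, rfl, hab, haltb, hsa, hsb⟩ := edge_arc harcs he
      have hmem : (a, b) ∈ T' := by
        rw [hT'def, Finset.mem_erase]
        refine ⟨?_, hab⟩
        intro h
        have ha : a = 0 := congrArg Prod.fst h
        exact h0q (ha ▸ hsa)
      exact (arcGraph T').mem_edgeSet.2 (adj_of_mem hmem haltb)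
    · refine Or.inl ⟨(Walk.cons h0c q).transfer (arcGraph T') ?_⟩
      intro e he
      obtain ⟨a, b, rfl, hab, haltb, hsa, hsb⟩ := edge_arc harcs he
      have hmem : (a, b) ∈ T' := by
        rw [hT'def, Finset.mem_erase]
        refine ⟨?_, hab⟩
        intro h
        rw [(Prod.mk.inj h).1, (Prod.mk.inj h).2] at he
        rw [Walk.edges_cons, List.mem_cons] at he
        rcases he with h1 | h1
        · rw [Sym2.eq_iff] at h1
          rcases h1 with ⟨h2, h3⟩ | ⟨h2, h3⟩
          · exact hc h3.symm
          · exact h0c.ne h2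
        · exact h0q (q.fst_mem_support_of_mem_edges h1)
      exact (arcGraph T').mem_edgeSet.2 (adj_of_mem hmem haltb)
  -- the two components are disjoint
  have hdisj : ∀ v, (arcGraph T').Reachable 0 v → (arcGraph T').Reachable (m + 1) v → False := by
    intro v h1 h2
    have hbridge := (isAcyclic_iff_forall_adj_isBridge.1 hacyc) (adj_of_mem htop (by omega))
    rw [isBridge_iff] at hbridge
    apply hbridge
    have hle : arcGraph T' ≤ arcGraph T \ SimpleGraph.fromEdgeSet {s(0, m + 1)} := by
      intro a b hab
      rw [sdiff_adj]
      constructor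
      · exact arcGraph_mono hT'sub hab
      · intro hbad
        rw [fromEdgeSet_adj] at hbad
        obtain ⟨hbad1, hbad2⟩ := hbad
        rw [Set.mem_singleton_iff, Sym2.eq_iff] at hbad1
        rcases (arcGraph_adj.1 hab).1 with h' | h'
        · have h'' := (Finset.mem_erase.1 h').1
          have hb := hbndT' _ h'
          rcases hbad1 with ⟨rfl, rfl⟩ | ⟨rfl, rfl⟩
          · exact h'' rfl
          · omega
        · have h'' := (Finset.mem_erase.1 h').1
          have hb := hbndT' _ h'
          rcases hbad1 with ⟨rfl, rfl⟩ | ⟨rfl, rfl⟩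
          · omega
          · exact h'' rfl
    exact (h1.trans h2.symm).mono hle
  -- component finsets
  set A := Finset.filter (fun v => (arcGraph T').Reachable 0 v) (Finset.range (m + 2)) with hAdef
  set B := Finset.filter (fun v => (arcGraph T').Reachable (m + 1) v) (Finset.range (m + 2))
    with hBdef
  have h0A : 0 ∈ A := by
    rw [hAdef, Finset.mem_filter, Finset.mem_range]; exact ⟨by omega, Reachable.refl _⟩
  have htopB : m + 1 ∈ B := by
    rw [hBdef, Finset.mem_filter, Finset.mem_range]; exact ⟨by omega, Reachable.refl _⟩
  set k := A.max' ⟨0, h0A⟩ with hkdef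
  have hkA : k ∈ A := A.max'_mem _
  have hkmax : ∀ a ∈ A, a ≤ k := fun a ha => A.le_max' a ha
  have hkreach : (arcGraph T').Reachable 0 k := (Finset.mem_filter.1 hkA).2
  set b0 := B.min' ⟨m + 1, htopB⟩ with hb0def
  have hb0B : b0 ∈ B := B.min'_mem _
  have hb0min : ∀ b ∈ B, b0 ≤ b := fun b hb => B.min'_le b hb
  have hb0reach : (arcGraph T').Reachable (m + 1) b0 := (Finset.mem_filter.1 hb0B).2
  -- key crossing argument: k < b0
  have hcore : k < b0 := by
    by_contra hcon
    push_neg at hcon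
    have hne : b0 ≠ k := fun h => hdisj k hkreach (h ▸ hb0reach)
    have hb0k : b0 < k := lt_of_le_of_ne hcon hne
    have hb0pos : 0 < b0 :=
      Nat.pos_of_ne_zero (fun h => hdisj 0 (Reachable.refl _) (h ▸ hb0reach))
    obtain ⟨w1⟩ := hkreach
    have hb0ns : b0 ∉ w1.support := fun hs =>
      hdisj b0 (reach_of_mem_support w1 hs) hb0reach
    obtain ⟨x, y, hxy, hxye, hx, hy⟩ := cover w1 hb0ns hb0pos hb0k
    have hyA : (arcGraph T').Reachable 0 y :=
      reach_of_mem_support w1 (w1.snd_mem_support_of_mem_edges hxye)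
    have hybnd : y < m + 2 := hvbnd hxy
    have hytop : y ≠ m + 1 := fun h => hdisj y hyA (h ▸ Reachable.refl _)
    have hylt : y < m + 1 := by omega
    obtain ⟨w2⟩ := hb0reach.symm
    have hyns : y ∉ w2.support := fun hs =>
      hdisj y hyA (hb0reach.trans (reach_of_mem_support w2 hs))
    obtain ⟨x', y', hxy', he', hx', hy'⟩ := cover w2 hyns hy hylt
    have hx'B : (arcGraph T').Reachable (m + 1) x' :=
      hb0reach.trans (reach_of_mem_support w2 (w2.fst_mem_support_of_mem_edges he'))
    have hx'bnd : x' < m + 2 := by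
      have := hvbnd hxy'.symm
      omega
    have hb0x' : b0 ≤ x' := hb0min x' (by
      rw [hBdef, Finset.mem_filter, Finset.mem_range]; exact ⟨hx'bnd, hx'B⟩)
    exact ncrP_of harcsT' hncrT' x x' y y' (by omega) hx' hy' hxy hxy'
  have hkm : k ≤ m := by
    have : b0 ≤ m + 1 := hb0min _ htopB
    omega
  -- characterization of the two components
  have hchar : ∀ v < m + 2, ((arcGraph T').Reachable 0 v ↔ v ≤ k) := by
    intro v hv
    constructor
    · intro h
      exact hkmax v (by rw [hAdef, Finset.mem_filter, Finset.mem_range]; exact ⟨hv, h⟩)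
    · intro hvk
      rcases hAB v hv with h | h
      · exact h
      · exfalso
        have : b0 ≤ v := hb0min v (by
          rw [hBdef, Finset.mem_filter, Finset.mem_range]; exact ⟨hv, h⟩)
        omega
  have hcharB : ∀ v < m + 2, ((arcGraph T').Reachable (m + 1) v ↔ k < v) := by
    intro v hv
    constructor
    · intro h
      have : b0 ≤ v := hb0min v (by
        rw [hBdef, Finset.mem_filter, Finset.mem_range]; exact ⟨hv, h⟩)
      omega
    · intro hkv
      rcases hAB v hv with h | h
      · exact absurd ((hchar v hv).1 h) (by omega)
      · exact h
  -- classification of arcs of T'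
  have hclass : ∀ p ∈ T', (p.1 ≤ k ∧ p.2 ≤ k) ∨ (k < p.1 ∧ k < p.2) := by
    intro p hp
    have hadj : (arcGraph T').Adj p.1 p.2 := by
      refine adj_of_mem ?_ (harcsT' p hp)
      simpa using hp
    have hb := hbndT' p hp
    rcases hAB p.1 (by omega) with h | h
    · left
      refine ⟨(hchar p.1 (by omega)).1 h, (hchar p.2 (by omega)).1 (h.trans hadj.reachable)⟩
    · right
      refine ⟨(hcharB p.1 (by omega)).1 h, (hcharB p.2 (by omega)).1 (h.trans hadj.reachable)⟩
  set T₁ := T'.filter (fun p => p.2 ≤ k) with hT1def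
  set T₂pre := T'.filter (fun p => k < p.1) with hT2predef
  have hT1sub : T₁ ⊆ T' := Finset.filter_subset _ _
  have hT2presub : T₂pre ⊆ T' := Finset.filter_subset _ _
  have hpart : T' = T₁ ∪ T₂pre := by
    ext p
    simp only [hT1def, hT2predef, Finset.mem_union, Finset.mem_filter]
    constructor
    · intro hp
      rcases hclass p hp with h | h
      · exact Or.inl ⟨hp, h.2⟩
      · exact Or.inr ⟨hp, h.1⟩
    · rintro (⟨hp, -⟩ | ⟨hp, -⟩) <;> exact hp
  set T₂ := T₂pre.image (unshiftArc (k + 1)) with hT2def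
  refine ⟨k, hkm, T₁, T₂, ⟨?_, ?_, ?_, ?_⟩, ⟨?_, ?_, ?_, ?_⟩, ?_⟩
  · -- arcs of T₁
    intro p hp
    have h1 := harcsT' p (hT1sub hp)
    have h2 := (Finset.mem_filter.1 hp).2
    exact ⟨h1, by omega⟩
  · exact fun p hp q hq => haltT' p (hT1sub hp) q (hT1sub hq)
  · exact fun p hp q hq => hncrT' p (hT1sub hp) q (hT1sub hq)
  · -- connectivity of T₁
    intro v hv
    obtain ⟨w⟩ := (hchar v (by omega)).2 (by omega)
    refine ⟨w.transfer (arcGraph T₁) ?_⟩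
    intro e he
    obtain ⟨a, b, rfl, hab, haltb, hsa, hsb⟩ := edge_arc harcsT' he
    have hbA : (arcGraph T').Reachable 0 b := reach_of_mem_support w hsb
    have hbbnd : b < m + 2 := (hbndT' _ hab).2
    have hmem : (a, b) ∈ T₁ := by
      rw [hT1def, Finset.mem_filter]
      exact ⟨hab, (hchar b hbbnd).1 hbA⟩
    exact (arcGraph T₁).mem_edgeSet.2 (adj_of_mem hmem haltb)
  · -- arcs of T₂
    intro p hp
    rw [hT2def, Finset.mem_image] at hp
    obtain ⟨q, hq, rfl⟩ := hp
    have h1 := harcsT' q (hT2presub hq)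
    have h2 := (hbndT' q (hT2presub hq)).2
    have h3 := (Finset.mem_filter.1 hq).2
    simp only [unshiftArc]
    constructor <;> omega
  · -- alternation for T₂
    intro p hp q hq
    rw [hT2def, Finset.mem_image] at hp hq
    obtain ⟨p', hp', rfl⟩ := hp
    obtain ⟨q', hq', rfl⟩ := hq
    have h1 := harcsT' p' (hT2presub hp')
    have h2 := (Finset.mem_filter.1 hp').2
    have h3 := harcsT' q' (hT2presub hq')
    have h4 := (Finset.mem_filter.1 hq').2
    have h5 := haltT' p' (hT2presub hp') q' (hT2presub hq')
    simp only [unshiftArc]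
    intro h
    apply h5
    omega
  · -- noncrossing for T₂
    intro p hp q hq
    rw [hT2def, Finset.mem_image] at hp hq
    obtain ⟨p', hp', rfl⟩ := hp
    obtain ⟨q', hq', rfl⟩ := hq
    have h1 := harcsT' p' (hT2presub hp')
    have h2 := (Finset.mem_filter.1 hp').2
    have h3 := harcsT' q' (hT2presub hq')
    have h4 := (Finset.mem_filter.1 hq').2
    have h5 := hncrT' p' (hT2presub hp') q' (hT2presub hq')
    simp only [unshiftArc]
    intro h
    apply h5
    omega
  · -- connectivity of T₂
    have hreach2 : ∀ v ≤ m - k, (arcGraph T₂).Reachable (m - k) v := by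
      intro v hv
      have hvk : k < v + (k + 1) := by omega
      have hvbnd2 : v + (k + 1) < m + 2 := by omega
      obtain ⟨w⟩ := (hcharB (v + (k + 1)) hvbnd2).2 hvk
      have hw2 : (arcGraph T₂pre).Reachable (m + 1) (v + (k + 1)) := by
        refine ⟨w.transfer (arcGraph T₂pre) ?_⟩
        intro e he
        obtain ⟨a, b, rfl, hab, haltb, hsa, hsb⟩ := edge_arc harcsT' he
        have haB : (arcGraph T').Reachable (m + 1) a := reach_of_mem_support w hsa
        have habnd : a < m + 2 := by have := hbndT' _ hab; omega
        have hmem : (a, b) ∈ T₂pre := by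
          rw [hT2predef, Finset.mem_filter]
          exact ⟨hab, (hcharB a habnd).1 haB⟩
        exact (arcGraph T₂pre).mem_edgeSet.2 (adj_of_mem hmem haltb)
      have := reach_unshift (s := k + 1) (fun p hp => harcsT' p (hT2presub hp))
        (fun p hp => by have h6 : k < p.1 := (Finset.mem_filter.1 hp).2; omega) hw2
      rw [show m + 1 - (k + 1) = m - k by omega, Nat.add_sub_cancel] at this
      exact this
    intro v hv
    exact (hreach2 0 (by omega)).symm.trans (hreach2 v (by omega))
  · -- reassembly
    have hshift_unshift : ∀ q ∈ T₂pre, shiftArc (k + 1) (unshiftArc (k + 1) q) = q := by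
      rintro ⟨q1, q2⟩ hq
      have h1 : k < q1 := (Finset.mem_filter.1 hq).2
      have h2 : q1 < q2 := harcsT' _ (hT2presub hq)
      simp only [shiftArc, unshiftArc, Prod.mk.injEq]
      omega
    have himg : Finset.image (shiftArc (k + 1)) T₂ = T₂pre := by
      rw [hT2def, Finset.image_image]
      ext p
      simp only [Finset.mem_image, Function.comp_apply]
      constructor
      · rintro ⟨q, hq, rfl⟩
        rw [hshift_unshift q hq]
        exact hq
      · intro hp
        exact ⟨p, hp, hshift_unshift p hp⟩
    rw [glue, himg, ← hpart, hT'def, Finset.insert_erase htop]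

lemma glue_shape {m k : ℕ} {T₁ T₂ : Finset (ℕ × ℕ)} {p : ℕ × ℕ} (hp : p ∈ glue m k T₁ T₂) :
    p = (0, m + 1) ∨ p ∈ T₁ ∨ ∃ q ∈ T₂, p = shiftArc (k + 1) q := by
  rw [glue, Finset.mem_insert, Finset.mem_union, Finset.mem_image] at hp
  rcases hp with h | h | ⟨q, hq, rfl⟩
  · exact Or.inl h
  · exact Or.inr (Or.inl h)
  · exact Or.inr (Or.inr ⟨q, hq, rfl⟩)

lemma glue_ok {m k : ℕ} {T₁ T₂ : Finset (ℕ × ℕ)} (hk : k ≤ m)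
    (h1 : Ok (k + 1) T₁) (h2 : Ok ((m - k) + 1) T₂) : Ok (m + 2) (glue m k T₁ T₂) := by
  classical
  have hsub1 : T₁ ⊆ glue m k T₁ T₂ := by
    intro p hp; rw [glue, Finset.mem_insert, Finset.mem_union]; exact Or.inr (Or.inl hp)
  have hsub2 : T₂.image (shiftArc (k + 1)) ⊆ glue m k T₁ T₂ := by
    intro p hp; rw [glue, Finset.mem_insert, Finset.mem_union]; exact Or.inr (Or.inr hp)
  refine ⟨?_, ?_, ?_, ?_⟩
  · intro p hp
    rcases glue_shape hp with rfl | hp1 | ⟨⟨a, b⟩, hq, rfl⟩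
    · constructor <;> omega
    · have := h1.1 p hp1; constructor <;> omega
    · have := h2.1 _ hq
      simp only [shiftArc] at this ⊢
      constructor <;> omega
  · intro p hp q hq
    rcases glue_shape hp with rfl | hp1 | ⟨⟨a, b⟩, hp2, rfl⟩ <;>
      rcases glue_shape hq with rfl | hq1 | ⟨⟨c, d⟩, hq2, rfl⟩
    · simp
    · have := h1.1 q hq1; simp only [shiftArc] at *; omega
    · have := h2.1 _ hq2; simp only [shiftArc] at *; omega
    · have := h1.1 p hp1; simp only [shiftArc] at *; omega
    · exact h1.2.1 p hp1 q hq1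
    · have ha := h1.1 p hp1; have hb := h2.1 _ hq2; simp only [shiftArc] at *; omega
    · have := h2.1 _ hp2; simp only [shiftArc] at *; omega
    · have ha := h2.1 _ hp2; have hb := h1.1 q hq1; simp only [shiftArc] at *; omega
    · have := h2.2.1 _ hp2 _ hq2; simp only [shiftArc] at *; omega
  · intro p hp q hq
    rcases glue_shape hp with rfl | hp1 | ⟨⟨a, b⟩, hp2, rfl⟩ <;>
      rcases glue_shape hq with rfl | hq1 | ⟨⟨c, d⟩, hq2, rfl⟩
    · simp
    · have := h1.1 q hq1; simp only [shiftArc] at *; omega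
    · have := h2.1 _ hq2; simp only [shiftArc] at *; omega
    · have := h1.1 p hp1; simp only [shiftArc] at *; omega
    · exact h1.2.2.1 p hp1 q hq1
    · have ha := h1.1 p hp1; have hb := h2.1 _ hq2; simp only [shiftArc] at *; omega
    · have := h2.1 _ hp2; simp only [shiftArc] at *; omega
    · have ha := h2.1 _ hp2; have hb := h1.1 q hq1; simp only [shiftArc] at *; omega
    · have hn := h2.2.2.1 _ hp2 _ hq2
      have ha := h2.1 _ hp2; have hb := h2.1 _ hq2
      simp only [shiftArc] at *
      omega
  · -- connectivity
    have hreach1 : ∀ v ≤ k, (arcGraph (glue m k T₁ T₂)).Reachable 0 v := fun v hv =>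
      reach_mono hsub1 (h1.2.2.2 v (by omega))
    have hreach2 : ∀ v ≤ m - k, (arcGraph (glue m k T₁ T₂)).Reachable (k + 1) (v + (k + 1)) := by
      intro v hv
      have := reach_shift (k + 1) (h2.2.2.2 v (by omega))
      simpa using reach_mono hsub2 this
    have hadj0 : (arcGraph (glue m k T₁ T₂)).Adj 0 (m + 1) :=
      adj_of_mem (Finset.mem_insert_self _ _) (by omega)
    have htopr : (arcGraph (glue m k T₁ T₂)).Reachable (k + 1) (m + 1) := by
      have := hreach2 (m - k) le_rfl
      rwa [show m - k + (k + 1) = m + 1 by omega] at this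
    intro v hv
    by_cases hvk : v ≤ k
    · exact hreach1 v hvk
    · have hv2 : v - (k + 1) ≤ m - k := by omega
      have := hreach2 (v - (k + 1)) hv2
      rw [show v - (k + 1) + (k + 1) = v by omega] at this
      exact (hadj0.reachable.trans htopr.symm).trans this

lemma glue_reach {m k : ℕ} {T₁ T₂ : Finset (ℕ × ℕ)} (hk : k ≤ m)
    (h1 : Ok (k + 1) T₁) (h2 : Ok ((m - k) + 1) T₂) (v : ℕ) :
    (arcGraph (T₁ ∪ T₂.image (shiftArc (k + 1)))).Reachable 0 v ↔ v ≤ k := by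
  constructor
  · intro h
    refine reach_le ?_ ?_ h (by omega)
    · intro p hp
      rcases Finset.mem_union.1 hp with h' | h'
      · exact (h1.1 p h').1
      · obtain ⟨⟨a, b⟩, hq, rfl⟩ := Finset.mem_image.1 h'
        have := (h2.1 _ hq).1
        simp only [shiftArc] at *
        omega
    · intro p hp
      rcases Finset.mem_union.1 hp with h' | h'
      · have := h1.1 p h'; omega
      · obtain ⟨⟨a, b⟩, hq, rfl⟩ := Finset.mem_image.1 h'
        simp only [shiftArc]
        omega
  · intro h
    exact reach_mono Finset.subset_union_left (h1.2.2.2 v (by omega))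

lemma glue_erase {m k : ℕ} {T₁ T₂ : Finset (ℕ × ℕ)} (hk : k ≤ m)
    (h1 : Ok (k + 1) T₁) :
    (glue m k T₁ T₂).erase (0, m + 1) = T₁ ∪ T₂.image (shiftArc (k + 1)) := by
  classical
  rw [glue]
  apply Finset.erase_insert
  rw [Finset.mem_union]
  rintro (h | h)
  · have := h1.1 _ h; simp at this; omega
  · obtain ⟨⟨a, b⟩, hq, hab⟩ := Finset.mem_image.1 h
    have : a + (k + 1) = 0 := congrArg Prod.fst hab
    omega

lemma glue_filter1 {k : ℕ} {T₁ T₂ : Finset (ℕ × ℕ)}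
    (h1 : Ok (k + 1) T₁) :
    (T₁ ∪ T₂.image (shiftArc (k + 1))).filter (fun p => p.2 ≤ k) = T₁ := by
  classical
  ext p
  rw [Finset.mem_filter, Finset.mem_union]
  constructor
  · rintro ⟨h' | h', hc⟩
    · exact h'
    · obtain ⟨⟨a, b⟩, hq, rfl⟩ := Finset.mem_image.1 h'
      exfalso
      simp only [shiftArc] at hc
      omega
  · intro hp
    exact ⟨Or.inl hp, by have := h1.1 p hp; omega⟩

lemma glue_filter2 {k : ℕ} {T₁ T₂ : Finset (ℕ × ℕ)}
    (h1 : Ok (k + 1) T₁) :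
    (T₁ ∪ T₂.image (shiftArc (k + 1))).filter (fun p => k < p.1) = T₂.image (shiftArc (k + 1)) := by
  classical
  ext p
  rw [Finset.mem_filter, Finset.mem_union]
  constructor
  · rintro ⟨h' | h', hc⟩
    · exfalso
      have := h1.1 p h'
      omega
    · exact h'
  · intro hp
    obtain ⟨⟨a, b⟩, hq, rfl⟩ := Finset.mem_image.1 hp
    exact ⟨Or.inr hp, by simp only [shiftArc]; omega⟩

lemma shiftArc_injective (s : ℕ) : Function.Injective (shiftArc s) := by
  rintro ⟨a, b⟩ ⟨c, d⟩ h
  simp only [shiftArc, Prod.mk.injEq] at h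
  simp only [Prod.mk.injEq]
  omega

instance finite_ok (n : ℕ) : Finite {T : Finset (ℕ × ℕ) // Ok n T} := by
  classical
  have h : {T : Finset (ℕ × ℕ) | Ok n T} ⊆
      ↑((Finset.range n ×ˢ Finset.range n).powerset) := by
    intro T hT
    simp only [Finset.coe_powerset, Set.mem_preimage, Set.mem_powerset_iff]
    intro p hp
    have := hT.1 p hp
    simp only [Finset.coe_product, Set.mem_prod, Finset.mem_coe, Finset.mem_range]
    constructor <;> omega
  exact (Set.Finite.subset ((Finset.range n ×ˢ Finset.range n).powerset.finite_toSet) h).to_subtype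

lemma nat_card_sigma {ι : Type} [Fintype ι] (f : ι → Type) [∀ i, Finite (f i)] :
    Nat.card ((i : ι) × f i) = ∑ i, Nat.card (f i) := by
  have : ∀ i, Fintype (f i) := fun i => Fintype.ofFinite _
  simp [Nat.card_eq_fintype_card]

lemma card_step (m : ℕ) :
    Nat.card {T : Finset (ℕ × ℕ) // Ok (m + 2) T} =
      ∑ k : Fin (m + 1),
        Nat.card {T : Finset (ℕ × ℕ) // Ok (k.val + 1) T} *
          Nat.card {T : Finset (ℕ × ℕ) // Ok ((m - k.val) + 1) T} := by
  classical
  set F : (Σ k : Fin (m + 1),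
      {T : Finset (ℕ × ℕ) // Ok (k.val + 1) T} × {T : Finset (ℕ × ℕ) // Ok ((m - k.val) + 1) T}) →
      {T : Finset (ℕ × ℕ) // Ok (m + 2) T} :=
    fun σ => ⟨glue m σ.1 σ.2.1.1 σ.2.2.1,
      glue_ok (by omega) σ.2.1.2 σ.2.2.2⟩ with hF
  have hbij : Function.Bijective F := by
    constructor
    · rintro ⟨⟨k, hklt⟩, ⟨T₁, h1⟩, ⟨T₂, h2⟩⟩ ⟨⟨k', hklt'⟩, ⟨T₁', h1'⟩, ⟨T₂', h2'⟩⟩ heq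
      have hgl : glue m k T₁ T₂ = glue m k' T₁' T₂' := congrArg Subtype.val heq
      have hU : T₁ ∪ T₂.image (shiftArc (k + 1)) = T₁' ∪ T₂'.image (shiftArc (k' + 1)) := by
        rw [← glue_erase (m := m) (k := k) (T₂ := T₂) (show k ≤ m by omega) h1,
          ← glue_erase (m := m) (k := k') (T₂ := T₂') (show k' ≤ m by omega) h1', hgl]
      have hkk : k = k' := by
        have c1 := glue_reach (by omega) h1 h2 k'
        have c2 := glue_reach (by omega) h1' h2' k
        rw [hU] at c1
        rw [← hU] at c2
        have d1 := glue_reach (by omega) h1' h2' k'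
        have d2 := glue_reach (by omega) h1 h2 k
        have e1 : k' ≤ k := c1.1 (d1.2 le_rfl)
        have e2 : k ≤ k' := c2.1 (d2.2 le_rfl)
        omega
      subst hkk
      have hT1 : T₁ = T₁' := by
        rw [← glue_filter1 (T₂ := T₂) h1, ← glue_filter1 (T₂ := T₂') h1', hU]
      have hT2 : T₂ = T₂' := by
        have := glue_filter2 (T₂ := T₂) h1
        rw [hU, glue_filter2 (T₂ := T₂') h1'] at this
        exact Finset.image_injective (shiftArc_injective (k + 1)) this.symm
      subst hT1; subst hT2
      rfl
    · rintro ⟨T, hT⟩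
      obtain ⟨k, hk, T₁, T₂, h1, h2, heq⟩ := split hT
      exact ⟨⟨⟨k, by omega⟩, ⟨T₁, h1⟩, ⟨T₂, h2⟩⟩, Subtype.ext heq.symm⟩
  rw [Nat.card_congr (Equiv.ofBijective F hbij).symm, nat_card_sigma]
  congr 1
  ext k
  rw [Nat.card_prod]

lemma card_base : Nat.card {T : Finset (ℕ × ℕ) // Ok 1 T} = 1 := by
  have hok : Ok 1 (∅ : Finset (ℕ × ℕ)) := by
    refine ⟨by simp, by simp, by simp, ?_⟩
    intro v hv
    interval_cases v
    exact Reachable.refl _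
  have huniq : ∀ x : {T : Finset (ℕ × ℕ) // Ok 1 T}, x = ⟨∅, hok⟩ := by
    rintro ⟨T, hT⟩
    have hTe : T = ∅ := by
      rw [Finset.eq_empty_iff_forall_notMem]
      intro p hp
      have := hT.1 p hp
      omega
    subst hTe
    rfl
  have : Unique {T : Finset (ℕ × ℕ) // Ok 1 T} := ⟨⟨⟨∅, hok⟩⟩, huniq⟩
  exact Nat.card_unique

theorem card_ok (n : ℕ) : Nat.card {T : Finset (ℕ × ℕ) // Ok (n + 1) T} = catalan n := by
  induction n using Nat.strong_induction_on with
  | _ n ih =>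
    match n with
    | 0 => exact card_base.trans catalan_zero.symm
    | Nat.succ m =>
      rw [show m + 1 + 1 = m + 2 from rfl, card_step m, catalan_succ]
      apply Finset.sum_congr rfl
      intro k _
      rw [ih k.val (by omega), ih (m - k.val) (by omega)]


variable {d : ℕ}

def arcVal (d : ℕ) (e : Arc d) : ℕ × ℕ := (e.1.1.val, e.1.2.val)

lemma arcVal_inj : Function.Injective (arcVal d) := by
  rintro ⟨⟨a, b⟩, h⟩ ⟨⟨c, e⟩, h'⟩ heq
  simp only [arcVal, Prod.mk.injEq] at heq
  apply Subtype.ext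
  simp only [Prod.mk.injEq]
  exact ⟨Fin.ext heq.1, Fin.ext heq.2⟩

lemma image_bound (T : Finset (Arc d)) : ∀ p ∈ T.image (arcVal d), p.1 < p.2 ∧ p.2 < d := by
  intro p hp
  obtain ⟨e, he, rfl⟩ := Finset.mem_image.1 hp
  exact ⟨Fin.lt_def.1 e.2, e.1.2.isLt⟩

lemma treeGraph_adj_iff {T : Finset (Arc d)} {x y : Fin d} :
    (treeGraph d T).Adj x y ↔ (arcGraph (T.image (arcVal d))).Adj x.val y.val := by
  rw [treeGraph, SimpleGraph.fromEdgeSet_adj, arcGraph_adj]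
  constructor
  · rintro ⟨⟨e, he, hs⟩, hne⟩
    refine ⟨?_, fun h => hne (Fin.ext h)⟩
    rw [Sym2.eq_iff] at hs
    rcases hs with ⟨rfl, rfl⟩ | ⟨rfl, rfl⟩
    · exact Or.inl (Finset.mem_image.2 ⟨e, he, rfl⟩)
    · exact Or.inr (Finset.mem_image.2 ⟨e, he, rfl⟩)
  · rintro ⟨h | h, hne⟩
    · obtain ⟨e, he, heq⟩ := Finset.mem_image.1 h
      have h1 : e.1.1 = x := Fin.ext (congrArg Prod.fst heq)
      have h2 : e.1.2 = y := Fin.ext (congrArg Prod.snd heq)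
      exact ⟨⟨e, he, by rw [h1, h2]⟩, fun hc => hne (congrArg Fin.val hc)⟩
    · obtain ⟨e, he, heq⟩ := Finset.mem_image.1 h
      have h1 : e.1.1 = y := Fin.ext (congrArg Prod.fst heq)
      have h2 : e.1.2 = x := Fin.ext (congrArg Prod.snd heq)
      exact ⟨⟨e, he, by rw [h1, h2, Sym2.eq_swap]⟩, fun hc => hne (congrArg Fin.val hc)⟩

lemma reach_back {T : Finset (Arc d)} : ∀ {a b : ℕ},
    (arcGraph (T.image (arcVal d))).Walk a b → ∀ (ha : a < d) (hb : b < d),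
    (treeGraph d T).Reachable ⟨a, ha⟩ ⟨b, hb⟩ := by
  intro a b w
  induction w with
  | nil => intro ha hb; exact Reachable.refl _
  | @cons x c y hadj p ih =>
    intro ha hb
    have hc : c < d := by
      rcases (arcGraph_adj.1 hadj).1 with h | h
      · exact (image_bound T _ h).2
      · have := image_bound T _ h; omega
    have hstep : (treeGraph d T).Adj ⟨x, ha⟩ ⟨c, hc⟩ := treeGraph_adj_iff.2 hadj
    exact hstep.reachable.trans (ih hc hb)

lemma reach_iff {T : Finset (Arc d)} {x y : Fin d} :
    (treeGraph d T).Reachable x y ↔ (arcGraph (T.image (arcVal d))).Reachable x.val y.val := by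
  constructor
  · exact fun h => h.map ⟨Fin.val, fun hadj => treeGraph_adj_iff.1 hadj⟩
  · rintro ⟨w⟩
    have := reach_back w x.isLt y.isLt
    simpa [Fin.eta] using this

lemma ok_of (hd : 0 < d) {T : Finset (Arc d)}
    (h1 : (treeGraph d T).IsTree)
    (h2 : ¬ ∃ e ∈ T, ∃ f ∈ T, e.1.2 = f.1.1)
    (h3 : ¬ ∃ e ∈ T, ∃ f ∈ T, e.1.1 < f.1.1 ∧ f.1.1 < e.1.2 ∧ e.1.2 < f.1.2) :
    Ok d (T.image (arcVal d)) := by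
  refine ⟨image_bound T, ?_, ?_, ?_⟩
  · rintro p hp q hq
    obtain ⟨e, he, rfl⟩ := Finset.mem_image.1 hp
    obtain ⟨e', he', rfl⟩ := Finset.mem_image.1 hq
    exact fun heq => h2 ⟨e, he, e', he', Fin.ext heq⟩
  · rintro p hp q hq ⟨ha, hb, hc⟩
    obtain ⟨e, he, rfl⟩ := Finset.mem_image.1 hp
    obtain ⟨e', he', rfl⟩ := Finset.mem_image.1 hq
    exact h3 ⟨e, he, e', he', Fin.lt_def.2 ha, Fin.lt_def.2 hb, Fin.lt_def.2 hc⟩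
  · intro v hv
    have hconn := ((SimpleGraph.isTree_iff _).1 h1).1
    have := hconn.preconnected ⟨0, hd⟩ ⟨v, hv⟩
    exact reach_iff.1 this

lemma surj_ok (hd : 0 < d) {S : Finset (ℕ × ℕ)} (hS : Ok d S) :
    ∃ T : Finset (Arc d), ((treeGraph d T).IsTree ∧
      (¬ ∃ e ∈ T, ∃ f ∈ T, e.1.2 = f.1.1) ∧
      (¬ ∃ e ∈ T, ∃ f ∈ T, e.1.1 < f.1.1 ∧ f.1.1 < e.1.2 ∧ e.1.2 < f.1.2)) ∧
      T.image (arcVal d) = S := by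
  classical
  set T : Finset (Arc d) := S.attach.image (fun p =>
    (⟨(⟨p.1.1, lt_trans (hS.1 p.1 p.2).1 (hS.1 p.1 p.2).2⟩, ⟨p.1.2, (hS.1 p.1 p.2).2⟩),
      Fin.mk_lt_mk.2 (hS.1 p.1 p.2).1⟩ : Arc d)) with hTdef
  have himg : T.image (arcVal d) = S := by
    ext q
    constructor
    · intro hq
      obtain ⟨e, he, rfl⟩ := Finset.mem_image.1 hq
      rw [hTdef] at he
      obtain ⟨⟨p, hp⟩, -, rfl⟩ := Finset.mem_image.1 he
      exact hp
    · intro hq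
      have hmem : (⟨(⟨q.1, lt_trans (hS.1 q hq).1 (hS.1 q hq).2⟩, ⟨q.2, (hS.1 q hq).2⟩),
          Fin.mk_lt_mk.2 (hS.1 q hq).1⟩ : Arc d) ∈ T := by
        rw [hTdef]
        exact Finset.mem_image.2 ⟨⟨q, hq⟩, S.mem_attach _, rfl⟩
      exact Finset.mem_image.2 ⟨_, hmem, rfl⟩
  have hmemS : ∀ e ∈ T, arcVal d e ∈ S := by
    intro e he
    rw [← himg]
    exact Finset.mem_image.2 ⟨e, he, rfl⟩
  have hcond2 : ¬ ∃ e ∈ T, ∃ f ∈ T, e.1.2 = f.1.1 := by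
    rintro ⟨e, he, e', he', heq⟩
    exact hS.2.1 _ (hmemS e he) _ (hmemS e' he') (congrArg Fin.val heq)
  have hcond3 : ¬ ∃ e ∈ T, ∃ f ∈ T, e.1.1 < f.1.1 ∧ f.1.1 < e.1.2 ∧ e.1.2 < f.1.2 := by
    rintro ⟨e, he, e', he', hab, hbc, hcd⟩
    exact hS.2.2.1 _ (hmemS e he) _ (hmemS e' he')
      ⟨Fin.lt_def.1 hab, Fin.lt_def.1 hbc, Fin.lt_def.1 hcd⟩
  refine ⟨T, ⟨?_, hcond2, hcond3⟩, himg⟩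
  rw [SimpleGraph.isTree_iff]
  constructor
  · rw [SimpleGraph.connected_iff]
    refine ⟨fun x y => ?_, ⟨⟨0, hd⟩⟩⟩
    have hx : (treeGraph d T).Reachable ⟨0, hd⟩ x := by
      refine reach_iff.2 ?_
      rw [himg]
      exact hS.2.2.2 x.val x.isLt
    have hy : (treeGraph d T).Reachable ⟨0, hd⟩ y := by
      refine reach_iff.2 ?_
      rw [himg]
      exact hS.2.2.2 y.val y.isLt
    exact hx.symm.trans hy
  · apply acyclic
    · intro a b c hab hbc h1 h2
      have j1 := adj_elim (fun p hp => (image_bound T p hp).1)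
        (treeGraph_adj_iff.1 h1) (Fin.lt_def.1 hab)
      have j2 := adj_elim (fun p hp => (image_bound T p hp).1)
        (treeGraph_adj_iff.1 h2) (Fin.lt_def.1 hbc)
      rw [himg] at j1 j2
      exact hS.2.1 _ j1 _ j2 rfl
    · intro a b c e hab hbc hce h1 h2
      have j1 := adj_elim (fun p hp => (image_bound T p hp).1)
        (treeGraph_adj_iff.1 h1) (Fin.lt_def.1 (hab.trans hbc))
      have j2 := adj_elim (fun p hp => (image_bound T p hp).1)
        (treeGraph_adj_iff.1 h2) (Fin.lt_def.1 (hbc.trans hce))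
      rw [himg] at j1 j2
      exact hS.2.2.1 _ j1 _ j2 ⟨Fin.lt_def.1 hab, Fin.lt_def.1 hbc, Fin.lt_def.1 hce⟩

end NCT

/-- the number of spanning trees `T` of `G_d` such that
(a) no `i < j < k` has both `(i,j) ∈ T` and `(j,k) ∈ T`, and
(b) no `i < j < k < l` has both `(i,k) ∈ T` and `(j,l) ∈ T`,
equals the `(d-1)`-st Catalan number. -/
theorem card_noncrossing_spanning_trees (d : ℕ) (hd : 1 ≤ d) :
    Nat.card {T : Finset (Arc d) //
      (treeGraph d T).IsTree ∧
      (¬ ∃ e ∈ T, ∃ f ∈ T, e.1.2 = f.1.1) ∧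
      (¬ ∃ e ∈ T, ∃ f ∈ T, e.1.1 < f.1.1 ∧ f.1.1 < e.1.2 ∧ e.1.2 < f.1.2)} =
    catalan (d - 1) := by
  classical
  have hd0 : 0 < d := hd
  have hbij : Function.Bijective (fun x : {T : Finset (Arc d) //
      (treeGraph d T).IsTree ∧
      (¬ ∃ e ∈ T, ∃ f ∈ T, e.1.2 = f.1.1) ∧
      (¬ ∃ e ∈ T, ∃ f ∈ T, e.1.1 < f.1.1 ∧ f.1.1 < e.1.2 ∧ e.1.2 < f.1.2)} =>
      (⟨x.1.image (NCT.arcVal d), NCT.ok_of hd0 x.2.1 x.2.2.1 x.2.2.2⟩ :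
        {S : Finset (ℕ × ℕ) // NCT.Ok d S})) := by
    constructor
    · rintro ⟨T, hT⟩ ⟨T', hT'⟩ h
      have h' := congrArg Subtype.val h
      exact Subtype.ext (Finset.image_injective NCT.arcVal_inj h')
    · rintro ⟨S, hS⟩
      obtain ⟨T, hconds, himg⟩ := NCT.surj_ok hd0 hS
      exact ⟨⟨T, hconds⟩, Subtype.ext himg⟩
  rw [Nat.card_congr (Equiv.ofBijective _ hbij)]
  obtain ⟨n, rfl⟩ : ∃ n, d = n + 1 := ⟨d - 1, by omega⟩
  rw [NCT.card_ok n]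
  simp
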